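/- arXiv:1410.3639 — 4 statements merged into one kernel-verified Lean document; each statement's English description precedes it below -/
import Mathlib

section
/- If M ⊆ C(Θ) is compact (in the topology of uniform convergence on compact sets), then α(M) = {g ∈ C(Θ) : ∃f ∈ M, f ≤ g} is closed, and hence ψ_M(π) = ψ_{α(M)}(π) for every probability measure π on Θ with compact support. -/
open MeasureTheory Pointwise

/-- The operation α(M) = ∪_{f∈M} {g ∈ C(Θ) : f ≤ g}. -/
def alphaSet {Θ : Type*} [TopologicalSpace Θ] (M : Set C(Θ, ℝ)) : Set C(Θ, ℝ) :=
  {g | ∃ f ∈ M, f ≤ g}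

lemma alphaSet_eq_add {Θ : Type*} [TopologicalSpace Θ] (M : Set C(Θ, ℝ)) :
    alphaSet M = M + {h : C(Θ, ℝ) | 0 ≤ h} := by
  ext g
  constructor
  · rintro ⟨f, hf, hfg⟩
    exact ⟨f, hf, g - f, by simpa using hfg, by ring⟩
  · rintro ⟨f, hf, h, hh, rfl⟩
    exact ⟨f, hf, le_add_of_nonneg_right hh⟩

/-- if M ⊆ C(Θ) is compact then α(M) is closed, and hence
ψ_M(π) = ψ_{α(M)}(π) for every compactly supported probability measure π. -/
theorem alpha_isClosed_of_isCompact
    {Θ : Type*} [TopologicalSpace Θ] [LocallyCompactSpace Θ]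
    [MeasurableSpace Θ] [BorelSpace Θ]
    (M : Set C(Θ, ℝ)) (hM : IsCompact M) :
    IsClosed (alphaSet M) ∧
      ∀ (π : Measure Θ), IsProbabilityMeasure π →
        (∃ K : Set Θ, IsCompact K ∧ π Kᶜ = 0) →
        sInf ((fun g : C(Θ, ℝ) => ∫ θ, g θ ∂π) '' M)
          = sInf ((fun g : C(Θ, ℝ) => ∫ θ, g θ ∂π) '' alphaSet M) := by
  constructor
  · rw [alphaSet_eq_add]
    have hcl : IsClosed {h : C(Θ, ℝ) | 0 ≤ h} := by
      have : {h : C(Θ, ℝ) | 0 ≤ h} = ⋂ x : Θ, {h : C(Θ, ℝ) | 0 ≤ h x} := by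
        ext h
        simp [ContinuousMap.le_def]
      rw [this]
      exact isClosed_iInter fun x =>
        isClosed_le continuous_const (continuous_eval_const x)
    exact hcl.add_left_of_isCompact hM
  · intro π hπ ⟨K, hK, hKc⟩
    set φ : C(Θ, ℝ) → ℝ := fun g => ∫ θ, g θ ∂π with hφ
    -- integrability of any continuous function
    have hae : ∀ᵐ θ ∂π, θ ∈ K := ae_iff.mpr (by exact hKc)
    have hint : ∀ g : C(Θ, ℝ), Integrable (fun θ => g θ) π := by
      intro g
      obtain ⟨C, hC⟩ : ∃ C, ∀ θ ∈ K, ‖g θ‖ ≤ C := by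
        rcases (hK.image (continuous_norm.comp g.continuous)).bddAbove with ⟨C, hC⟩
        exact ⟨C, fun θ hθ => hC ⟨θ, hθ, rfl⟩⟩
      exact (integrable_const C).mono' g.continuous.aestronglyMeasurable
        (hae.mono fun θ hθ => hC θ hθ)
    have hmono : ∀ g ∈ alphaSet M, ∃ f ∈ M, φ f ≤ φ g := by
      rintro g ⟨f, hf, hfg⟩
      exact ⟨f, hf, integral_mono (hint f) (hint g) fun θ => hfg θ⟩
    have hsub : φ '' M ⊆ φ '' alphaSet M := by
      apply Set.image_mono
      intro f hf
      exact ⟨f, hf, le_refl f⟩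
    rcases M.eq_empty_or_nonempty with rfl | hMne
    · simp [alphaSet]
    by_cases hbdd : BddBelow (φ '' M)
    · have hbdd' : BddBelow (φ '' alphaSet M) := by
        obtain ⟨c, hc⟩ := hbdd
        refine ⟨c, ?_⟩
        rintro _ ⟨g, hg, rfl⟩
        obtain ⟨f, hf, hle⟩ := hmono g hg
        exact le_trans (hc ⟨f, hf, rfl⟩) hle
      apply le_antisymm
      · apply le_csInf ((hMne.image φ).mono hsub)
        rintro _ ⟨g, hg, rfl⟩
        obtain ⟨f, hf, hle⟩ := hmono g hg
        exact le_trans (csInf_le hbdd ⟨f, hf, rfl⟩) hle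
      · exact csInf_le_csInf hbdd' (hMne.image φ) hsub
    · have hbdd' : ¬ BddBelow (φ '' alphaSet M) := fun h => hbdd (h.mono hsub)
      rw [Real.sInf_of_not_bddBelow hbdd, Real.sInf_of_not_bddBelow hbdd']
end

section
/- Let H be a finite-dimensional Hilbert space, Θ and U finite sets, ρ : Θ → density operators on H, w : Θ × U → ℝ≥0, and M = (M_u)_{u∈U} a POVM (M_u ≥ 0, Σ_u M_u = I). Define the risk R_M(θ) = Σ_u w(θ,u) Tr(ρ(θ) M_u). Then min over POVMs M of max_{θ∈Θ} R_M(θ) equals max over probability distributions π on Θ of min over POVMs M of Σ_θ R_M(θ) π(θ) (both extrema are attained). -/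
open Matrix
open scoped ComplexOrder

variable {n : ℕ} {Θ U : Type*}

/-- A POVM with finite outcome set `U`: positive semidefinite operators summing to the identity. -/
def IsPOVM [Fintype U] (M : U → Matrix (Fin n) (Fin n) ℂ) : Prop :=
  (∀ u, (M u).PosSemidef) ∧ ∑ u, M u = 1

/-- The risk of the POVM `M` at parameter `θ`. -/
noncomputable def risk [Fintype U] (w : Θ → U → ℝ)
    (ρ : Θ → Matrix (Fin n) (Fin n) ℂ) (M : U → Matrix (Fin n) (Fin n) ℂ) (θ : Θ) : ℝ :=
  ∑ u, w θ u * ((ρ θ * M u).trace).re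

section Aux

lemma psd_real_smul {A : Matrix (Fin n) (Fin n) ℂ} (hA : A.PosSemidef) {a : ℝ} (ha : 0 ≤ a) :
    (a • A).PosSemidef := by
  refine Matrix.PosSemidef.of_dotProduct_mulVec_nonneg ?_ fun x => ?_
  · show (a • A)ᴴ = a • A
    rw [conjTranspose_smul, star_trivial, hA.1.eq]
  · have h : a • A = (a : ℂ) • A := by
      ext i j; simp [Complex.real_smul]
    rw [h, smul_mulVec, dotProduct_smul, smul_eq_mul]
    exact mul_nonneg (by exact_mod_cast Complex.zero_le_real.mpr ha) (hA.dotProduct_mulVec_nonneg x)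

lemma star_single (i : Fin n) (c : ℂ) :
    star (Pi.single (M := fun _ : Fin n => ℂ) i c) = Pi.single i (star c) := by
  funext p; by_cases hp : p = i <;> simp [Pi.single_apply, hp]

lemma psd_diag {A : Matrix (Fin n) (Fin n) ℂ} (hA : A.PosSemidef) (i : Fin n) :
    0 ≤ A i i := by
  have h := hA.dotProduct_mulVec_nonneg (Pi.single (M := fun _ : Fin n => ℂ) i 1)
  simpa [star_single, mulVec_single, single_dotProduct] using h

lemma trace_mul_re_nonneg {A B : Matrix (Fin n) (Fin n) ℂ} (hA : A.PosSemidef)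
    (hB : B.PosSemidef) : 0 ≤ ((A * B).trace).re := by
  obtain ⟨C, rfl⟩ : ∃ C : Matrix (Fin n) (Fin n) ℂ, A = Cᴴ * C := by
    open scoped MatrixOrder in exact CStarAlgebra.nonneg_iff_eq_star_mul_self.mp hA.nonneg
  have h1 : (Cᴴ * C * B).trace = (C * B * Cᴴ).trace := (trace_mul_cycle C B Cᴴ).symm
  have h2 : (C * B * Cᴴ).PosSemidef := hB.mul_mul_conjTranspose_same C
  have h3 : (0:ℂ) ≤ (C * B * Cᴴ).trace := by
    rw [Matrix.trace]
    exact Finset.sum_nonneg fun i _ => psd_diag h2 i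
  rw [h1]
  exact (Complex.le_def.mp h3).1

lemma diag_re_le_one {A : Matrix (Fin n) (Fin n) ℂ} (hA1 : (1 - A).PosSemidef) (i : Fin n) :
    (A i i).re ≤ 1 := by
  have h := psd_diag hA1 i
  have heq : (1 - A) i i = 1 - A i i := by simp [Matrix.sub_apply]
  rw [heq] at h
  have := (Complex.le_def.mp h).1
  simp at this
  linarith

lemma entry_abs_le_one {A : Matrix (Fin n) (Fin n) ℂ} (hA : A.PosSemidef)
    (hA1 : (1 - A).PosSemidef) (i j : Fin n) : ‖A i j‖ ≤ 1 := by
  by_cases hij : i = j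
  · subst hij
    have h0 := psd_diag hA i
    have him : (A i i).im = 0 := (Complex.le_def.mp h0).2.symm
    have hre : 0 ≤ (A i i).re := (Complex.le_def.mp h0).1
    have hle := diag_re_le_one hA1 i
    rw [Complex.norm_def, Complex.normSq_apply, him]
    simp only [mul_zero, add_zero]
    rw [Real.sqrt_mul_self hre]
    exact hle
  · set z := A i j with hz
    by_cases hz0 : z = 0
    · simp [hz0]
    have hr : (0:ℝ) < ‖z‖ := norm_pos_iff.mpr hz0
    set r : ℝ := ‖z‖ with hrdef
    set c : ℂ := -(star z) / (r : ℂ) with hc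
    set x : Fin n → ℂ := Pi.single i 1 + Pi.single j c with hx
    have hQ := hA.dotProduct_mulVec_nonneg x
    have hAx : A *ᵥ x = (fun p => A p i) + (fun p => A p j * c) := by
      rw [hx, mulVec_add, mulVec_single, mulVec_single]
      funext p; simp; ring
    have hstar : star x = Pi.single i 1 + Pi.single j (star c) := by
      rw [hx, star_add, star_single, star_single, star_one]
    have hQval : star x ⬝ᵥ A *ᵥ x
        = A i i + A i j * c + (star c * A j i + star c * (A j j * c)) := by
      rw [hstar, hAx, add_dotProduct, dotProduct_add, dotProduct_add,
        single_dotProduct, single_dotProduct, single_dotProduct, single_dotProduct]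
      ring
    have hji : A j i = star z := by rw [hz, ← hA.1.apply i j, star_star]
    have hzz : z * star z = ((r:ℂ))^2 := by
      rw [Complex.star_def, Complex.mul_conj, hrdef]
      norm_cast
      rw [Complex.sq_norm]
    have hrne : (r:ℂ) ≠ 0 := by exact_mod_cast hr.ne'
    have h1 : A i j * c = -(r:ℂ) := by
      rw [← hz, hc, mul_div_assoc', mul_neg, neg_div, hzz]
      rw [sq]
      field_simp
    have h2 : star c * A j i = -(r:ℂ) := by
      rw [hji, hc]
      rw [star_div₀, star_neg, star_star]
      have : star ((r:ℂ)) = (r:ℂ) := by rw [Complex.star_def, Complex.conj_ofReal]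
      rw [this, div_mul_eq_mul_div, neg_mul, hzz, sq, neg_div]
      field_simp
    have h3 : star c * (A j j * c) = A j j := by
      rw [hc, star_div₀, star_neg, star_star]
      have : star ((r:ℂ)) = (r:ℂ) := by rw [Complex.star_def, Complex.conj_ofReal]
      rw [this]
      field_simp
      ring_nf
      rw [mul_comm z (A j j), mul_assoc, hzz]
    rw [hQval, h1, h2, h3] at hQ
    have hre := (Complex.le_def.mp hQ).1
    simp only [Complex.add_re, Complex.neg_re, Complex.ofReal_re, Complex.zero_re] at hre
    have hii := diag_re_le_one hA1 i
    have hjj := diag_re_le_one hA1 j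
    linarith

lemma isClosed_psd : IsClosed {A : Matrix (Fin n) (Fin n) ℂ | A.PosSemidef} := by
  have h1 : IsClosed {A : Matrix (Fin n) (Fin n) ℂ | A.IsHermitian} :=
    isClosed_eq (Continuous.matrix_conjTranspose continuous_id) continuous_id
  have h2 : ∀ x : Fin n → ℂ, IsClosed {A : Matrix (Fin n) (Fin n) ℂ | 0 ≤ star x ⬝ᵥ A *ᵥ x} :=
    fun x => isClosed_le continuous_const
      (Continuous.dotProduct continuous_const
        (Continuous.matrix_mulVec continuous_id continuous_const))
  have heq : {A : Matrix (Fin n) (Fin n) ℂ | A.PosSemidef} =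
      {A : Matrix (Fin n) (Fin n) ℂ | A.IsHermitian} ∩
      ⋂ x : Fin n → ℂ, {A | 0 ≤ star x ⬝ᵥ A *ᵥ x} := by
    ext A
    simp only [Set.mem_setOf_eq, Set.mem_inter_iff, Set.mem_iInter]
    exact posSemidef_iff_dotProduct_mulVec
  rw [heq]
  exact h1.inter (isClosed_iInter h2)

lemma isClosed_povm [Fintype U] : IsClosed {M : U → Matrix (Fin n) (Fin n) ℂ | IsPOVM M} := by
  have h1 : IsClosed {M : U → Matrix (Fin n) (Fin n) ℂ | ∀ u, (M u).PosSemidef} := by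
    have heq : {M : U → Matrix (Fin n) (Fin n) ℂ | ∀ u, (M u).PosSemidef} =
        ⋂ u, (fun M : U → Matrix (Fin n) (Fin n) ℂ => M u) ⁻¹' {A | A.PosSemidef} := by
      ext M; simp
    rw [heq]
    exact isClosed_iInter fun u => isClosed_psd.preimage (continuous_apply u)
  have h2 : IsClosed {M : U → Matrix (Fin n) (Fin n) ℂ | ∑ u, M u = 1} :=
    isClosed_eq (continuous_finset_sum _ fun u _ => continuous_apply u) continuous_const
  exact (h1.inter h2 : _)

lemma isCompact_box :
    IsCompact {M : U → Matrix (Fin n) (Fin n) ℂ | ∀ u i j, ‖M u i j‖ ≤ 1} := by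
  have heq : {M : U → Matrix (Fin n) (Fin n) ℂ | ∀ u i j, ‖M u i j‖ ≤ 1} =
      Set.pi Set.univ (fun _ : U =>
        (Set.pi Set.univ (fun _ : Fin n => Set.pi Set.univ fun _ : Fin n =>
          Metric.closedBall (0:ℂ) 1) : Set (Matrix (Fin n) (Fin n) ℂ))) := by
    ext M
    simp [Set.mem_pi, Complex.dist_eq]
    exact ⟨fun h u _ i _ j _ => by simpa using h u i j,
      fun h u i j => by simpa using h u trivial i trivial j trivial⟩
  rw [heq]
  exact isCompact_univ_pi fun u =>
    isCompact_univ_pi fun i => isCompact_univ_pi fun j => isCompact_closedBall _ _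

lemma psd_sum {ι : Type*} (s : Finset ι) (f : ι → Matrix (Fin n) (Fin n) ℂ)
    (hf : ∀ i ∈ s, (f i).PosSemidef) : (∑ i ∈ s, f i).PosSemidef := by
  classical
  induction s using Finset.induction_on with
  | empty => simpa using Matrix.PosSemidef.zero
  | insert a s hns ih =>
    rw [Finset.sum_insert hns]
    exact (hf _ (Finset.mem_insert_self _ _)).add
      (ih fun i hi => hf i (Finset.mem_insert_of_mem hi))

lemma risk_continuous [Fintype U] (w : Θ → U → ℝ) (ρ : Θ → Matrix (Fin n) (Fin n) ℂ) (θ : Θ) :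
    Continuous fun M : U → Matrix (Fin n) (Fin n) ℂ => risk w ρ M θ := by
  unfold risk
  refine continuous_finset_sum _ fun u _ => continuous_const.mul ?_
  exact Complex.continuous_re.comp
    ((Continuous.matrix_mul continuous_const (continuous_apply u)).matrix_trace)

lemma risk_combo [Fintype U] (w : Θ → U → ℝ) (ρ : Θ → Matrix (Fin n) (Fin n) ℂ)
    (a b : ℝ) (M N : U → Matrix (Fin n) (Fin n) ℂ) (θ : Θ) :
    risk w ρ (a • M + b • N) θ = a * risk w ρ M θ + b * risk w ρ N θ := by
  unfold risk
  rw [Finset.mul_sum, Finset.mul_sum, ← Finset.sum_add_distrib]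
  refine Finset.sum_congr rfl fun u _ => ?_
  have hmul : ρ θ * ((a • M + b • N) u) = a • (ρ θ * M u) + b • (ρ θ * N u) := by
    show ρ θ * (a • M u + b • N u) = _
    rw [Matrix.mul_add, Matrix.mul_smul, Matrix.mul_smul]
  rw [hmul, trace_add, trace_smul, trace_smul]
  simp only [Complex.add_re, Complex.real_smul, Complex.mul_re, Complex.ofReal_re,
    Complex.ofReal_im]
  ring

lemma continuous_finset_sup'_fun {X ι : Type*} [TopologicalSpace X] {s : Finset ι}
    (hs : s.Nonempty) (f : ι → X → ℝ) (hf : ∀ i, Continuous (f i)) :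
    Continuous fun x => s.sup' hs fun i => f i x := by
  induction hs using Finset.Nonempty.cons_induction with
  | singleton a => simpa using hf a
  | cons a s ha hs ih =>
    have heq : (fun x => (Finset.cons a s ha).sup' (Finset.cons_nonempty ha) fun i => f i x)
        = fun x => (f a x) ⊔ (s.sup' hs fun i => f i x) := by
      funext x; exact Finset.sup'_cons hs (f := fun i => f i x)
    rw [heq]
    exact (hf a).sup ih

end Aux

/-- the finite quantum minimax theorem, with both extrema attained. -/
theorem quantum_minimax_finite
    [Fintype Θ] [Nonempty Θ] [Fintype U] [Nonempty U]
    (ρ : Θ → Matrix (Fin n) (Fin n) ℂ)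
    (hρ : ∀ θ, (ρ θ).PosSemidef ∧ (ρ θ).trace = 1)
    (w : Θ → U → ℝ) (hw : ∀ θ u, 0 ≤ w θ u) :
    ∃ M₀ : {M : U → Matrix (Fin n) (Fin n) ℂ // IsPOVM M},
      ∃ π₀ ∈ stdSimplex ℝ Θ,
        (⨆ θ, risk w ρ M₀.1 θ) =
            (⨅ M : {M : U → Matrix (Fin n) (Fin n) ℂ // IsPOVM M}, ⨆ θ, risk w ρ M.1 θ) ∧
        (⨅ M : {M : U → Matrix (Fin n) (Fin n) ℂ // IsPOVM M}, ∑ θ, risk w ρ M.1 θ * π₀ θ) =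
            (⨆ π : stdSimplex ℝ Θ,
              ⨅ M : {M : U → Matrix (Fin n) (Fin n) ℂ // IsPOVM M},
                ∑ θ, risk w ρ M.1 θ * (π : Θ → ℝ) θ) ∧
        (⨅ M : {M : U → Matrix (Fin n) (Fin n) ℂ // IsPOVM M}, ⨆ θ, risk w ρ M.1 θ) =
            (⨆ π : stdSimplex ℝ Θ,
              ⨅ M : {M : U → Matrix (Fin n) (Fin n) ℂ // IsPOVM M},
                ∑ θ, risk w ρ M.1 θ * (π : Θ → ℝ) θ) := by
  classical
  set K : Set (U → Matrix (Fin n) (Fin n) ℂ) := {M | IsPOVM M} with hKdef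
  -- K is nonempty
  have hcard : (Fintype.card U : ℝ) ≠ 0 := by
    exact_mod_cast Fintype.card_ne_zero
  have hKne : K.Nonempty := by
    refine ⟨fun _ => ((Fintype.card U : ℝ)⁻¹) • 1, fun u => ?_, ?_⟩
    · exact psd_real_smul Matrix.PosSemidef.one (inv_nonneg.mpr (Nat.cast_nonneg _))
    · rw [Finset.sum_const, Finset.card_univ, ← Nat.cast_smul_eq_nsmul ℝ, smul_smul,
        mul_inv_cancel₀ hcard, one_smul]
  -- K is compact
  have hKsub : K ⊆ {M : U → Matrix (Fin n) (Fin n) ℂ | ∀ u i j, ‖M u i j‖ ≤ 1} := by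
    intro M hM u i j
    have h1 : (1 : Matrix (Fin n) (Fin n) ℂ) - M u = ∑ u' ∈ Finset.univ.erase u, M u' := by
      have := hM.2
      rw [← Finset.add_sum_erase _ _ (Finset.mem_univ u)] at this
      linear_combination (norm := abel) -this
    exact entry_abs_le_one (hM.1 u)
      (h1 ▸ psd_sum _ _ fun u' _ => hM.1 u') i j
  have hKcomp : IsCompact K := isCompact_box.of_isClosed_subset isClosed_povm hKsub
  -- K is convex
  have hKconv : Convex ℝ K := by
    rintro M hM N hN a b ha hb hab
    refine ⟨fun u => ?_, ?_⟩
    · exact (psd_real_smul (hM.1 u) ha).add (psd_real_smul (hN.1 u) hb)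
    · show ∑ u, (a • M u + b • N u) = 1
      rw [Finset.sum_add_distrib, ← Finset.smul_sum, ← Finset.smul_sum, hM.2, hN.2,
        ← add_smul, hab, one_smul]
  -- risk is nonnegative on K
  have hrnn : ∀ M ∈ K, ∀ θ, 0 ≤ risk w ρ M θ := by
    intro M hM θ
    exact Finset.sum_nonneg fun u _ =>
      mul_nonneg (hw θ u) (trace_mul_re_nonneg (hρ θ).1 (hM.1 u))
  have hΘ : (Finset.univ : Finset Θ).Nonempty := Finset.univ_nonempty
  set maxR : (U → Matrix (Fin n) (Fin n) ℂ) → ℝ :=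
    fun M => Finset.univ.sup' hΘ fun θ => risk w ρ M θ with hmaxRdef
  have hmaxR_eq : ∀ M, maxR M = ⨆ θ, risk w ρ M θ := fun M =>
    Finset.sup'_univ_eq_ciSup _
  have hmaxRcont : Continuous maxR :=
    continuous_finset_sup'_fun hΘ _ fun θ => risk_continuous w ρ θ
  obtain ⟨M₀, hM₀K, hM₀min⟩ := hKcomp.exists_isMinOn hKne hmaxRcont.continuousOn
  have hM₀min' : ∀ M ∈ K, maxR M₀ ≤ maxR M := fun M hM => hM₀min hM
  set v : ℝ := maxR M₀ with hvdef
  haveI : Nonempty {M : U → Matrix (Fin n) (Fin n) ℂ // IsPOVM M} := ⟨⟨M₀, hM₀K⟩⟩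
  -- the inf over POVMs of the max risk equals v
  have hinf : (⨅ M : {M : U → Matrix (Fin n) (Fin n) ℂ // IsPOVM M},
      ⨆ θ, risk w ρ M.1 θ) = v := by
    apply le_antisymm
    · have hb : BddBelow (Set.range fun M : {M : U → Matrix (Fin n) (Fin n) ℂ // IsPOVM M} =>
          ⨆ θ, risk w ρ M.1 θ) := by
        refine ⟨v, ?_⟩
        rintro x ⟨M, rfl⟩
        have h := hM₀min' M.1 M.2
        rw [hmaxR_eq] at h
        exact h
      calc (⨅ M : {M : U → Matrix (Fin n) (Fin n) ℂ // IsPOVM M}, ⨆ θ, risk w ρ M.1 θ)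
          ≤ ⨆ θ, risk w ρ M₀ θ := ciInf_le hb ⟨M₀, hM₀K⟩
        _ = v := (hmaxR_eq M₀).symm
    · refine le_ciInf fun M => ?_
      have h := hM₀min' M.1 M.2
      rw [hmaxR_eq] at h
      exact h
  -- Separation argument
  set D : Set (Θ → ℝ) := Set.pi Set.univ fun _ => Set.Iio v with hDdef
  have hDopen : IsOpen D := isOpen_set_pi Set.finite_univ fun _ _ => isOpen_Iio
  have hDconv : Convex ℝ D := convex_pi fun _ _ => convex_Iio v
  set C : Set (Θ → ℝ) := (fun M θ => risk w ρ M θ) '' K with hCdef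
  have hCconv : Convex ℝ C := by
    rintro _ ⟨M, hM, rfl⟩ _ ⟨N, hN, rfl⟩ a b ha hb hab
    refine ⟨a • M + b • N, hKconv hM hN ha hb hab, ?_⟩
    funext θ
    simp only [Pi.add_apply, Pi.smul_apply, smul_eq_mul]
    exact risk_combo w ρ a b M N θ
  have hdisj : Disjoint D C := by
    rw [Set.disjoint_left]
    rintro r hr ⟨M, hM, rfl⟩
    obtain ⟨θ, _, hθ⟩ := Finset.exists_mem_eq_sup' hΘ fun θ => risk w ρ M θ
    have hlt : risk w ρ M θ < v := hr θ (Set.mem_univ θ)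
    have hge : v ≤ maxR M := hM₀min' M hM
    rw [hmaxRdef] at hge
    simp only at hge
    rw [hθ] at hge
    linarith
  obtain ⟨f, c, hfD, hfC⟩ := geometric_hahn_banach_open hDconv hDopen hCconv hdisj
  set lam : Θ → ℝ := fun θ => f (Pi.single (M := fun _ : Θ => ℝ) θ 1) with hlamdef
  have hf_eq : ∀ x : Θ → ℝ, f x = ∑ θ, x θ * lam θ := by
    intro x
    have hx : x = ∑ θ, x θ • Pi.single (M := fun _ : Θ => ℝ) θ 1 := by
      funext p
      simp only [Finset.sum_apply, Pi.smul_apply, Pi.single_apply, smul_eq_mul,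
        mul_ite, mul_one, mul_zero]
      rw [Finset.sum_ite_eq Finset.univ p fun θ => x θ]
      simp
    conv_lhs => rw [hx]
    rw [map_sum]
    exact Finset.sum_congr rfl fun θ _ => by rw [f.map_smul, smul_eq_mul]
  have hconst_mem : ∀ ε : ℝ, 0 < ε → (fun _ : Θ => v - ε) ∈ D := by
    intro ε hε θ _
    simp only [Set.mem_Iio]
    linarith
  have hlam_nonneg : ∀ θ, 0 ≤ lam θ := by
    intro θ
    by_contra hneg
    push_neg at hneg
    have hfc : f (fun _ : Θ => v - 1) < c := hfD _ (hconst_mem 1 one_pos)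
    set t : ℝ := (c - f (fun _ : Θ => v - 1) + 1) / (-lam θ) with htdef
    have ht : 0 < t := div_pos (by linarith) (by linarith)
    have hmem : ((fun _ : Θ => v - 1) - t • Pi.single (M := fun _ : Θ => ℝ) θ 1) ∈ D := by
      intro θ' _
      simp only [Set.mem_Iio, Pi.sub_apply, Pi.smul_apply, Pi.single_apply, smul_eq_mul]
      by_cases hθ' : θ' = θ
      · rw [if_pos hθ', mul_one]; linarith
      · rw [if_neg hθ', mul_zero]; linarith
    have hval : f ((fun _ : Θ => v - 1) - t • Pi.single (M := fun _ : Θ => ℝ) θ 1)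
        = f (fun _ : Θ => v - 1) - t * lam θ := by
      rw [map_sub, f.map_smul, smul_eq_mul]
    have hlt := hfD _ hmem
    rw [hval] at hlt
    have htlam : t * lam θ = -(c - f (fun _ : Θ => v - 1) + 1) := by
      rw [htdef]
      field_simp [hneg.ne]
    rw [htlam] at hlt
    linarith
  set S : ℝ := ∑ θ, lam θ with hSdef
  have hconst_val : ∀ a : ℝ, f (fun _ : Θ => a) = a * S := by
    intro a
    rw [hf_eq, hSdef, Finset.mul_sum]
  have hSnonneg : 0 ≤ S := Finset.sum_nonneg fun θ _ => hlam_nonneg θ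
  have hrM₀C : (fun θ => risk w ρ M₀ θ) ∈ C := ⟨M₀, hM₀K, rfl⟩
  have hSpos : 0 < S := by
    rcases hSnonneg.lt_or_eq with h | h
    · exact h
    · exfalso
      have hall : ∀ θ ∈ Finset.univ, lam θ = 0 := by
        rw [← Finset.sum_eq_zero_iff_of_nonneg fun θ _ => hlam_nonneg θ, ← hSdef, ← h]
      have hf0 : ∀ x : Θ → ℝ, f x = 0 := by
        intro x
        rw [hf_eq]
        exact Finset.sum_eq_zero fun θ _ => by rw [hall θ (Finset.mem_univ θ), mul_zero]
      have h1 : (0:ℝ) < c := by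
        have := hfD _ (hconst_mem 1 one_pos)
        rwa [hf0] at this
      have h2 : c ≤ 0 := by
        have := hfC _ hrM₀C
        rwa [hf0] at this
      linarith
  have hvS : v * S ≤ c := by
    by_contra hcon
    push_neg at hcon
    set ε : ℝ := (v * S - c) / (2 * S) with hεdef
    have hε : 0 < ε := div_pos (by linarith) (by linarith)
    have := hfD _ (hconst_mem ε hε)
    rw [hconst_val] at this
    have hεS : ε * S = (v * S - c) / 2 := by
      rw [hεdef]
      field_simp
    nlinarith
  set π₀ : Θ → ℝ := fun θ => lam θ / S with hπ₀def
  have hπ₀mem : π₀ ∈ stdSimplex ℝ Θ := by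
    constructor
    · exact fun θ => div_nonneg (hlam_nonneg θ) hSpos.le
    · rw [hπ₀def, ← Finset.sum_div, ← hSdef, div_self hSpos.ne']
  haveI : Nonempty (stdSimplex ℝ Θ) := ⟨⟨π₀, hπ₀mem⟩⟩
  -- key lower bound from separation
  have hkey : ∀ M ∈ K, v ≤ ∑ θ, risk w ρ M θ * π₀ θ := by
    intro M hM
    have h1 : c ≤ f fun θ => risk w ρ M θ := hfC _ ⟨M, hM, rfl⟩
    rw [hf_eq] at h1
    have h2 : ∑ θ, risk w ρ M θ * π₀ θ = (∑ θ, risk w ρ M θ * lam θ) / S := by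
      rw [Finset.sum_div]
      exact Finset.sum_congr rfl fun θ _ => by rw [hπ₀def, mul_div_assoc]
    rw [h2, le_div_iff₀ hSpos]
    calc v * S ≤ c := hvS
      _ ≤ ∑ θ, risk w ρ M θ * lam θ := h1
  -- weak duality
  have hweak : ∀ π ∈ stdSimplex ℝ Θ, ∀ M ∈ K, ∑ θ, risk w ρ M θ * π θ ≤ maxR M := by
    intro π hπ M hM
    calc ∑ θ, risk w ρ M θ * π θ ≤ ∑ θ, maxR M * π θ := by
          refine Finset.sum_le_sum fun θ _ => ?_
          exact mul_le_mul_of_nonneg_right (Finset.le_sup' _ (Finset.mem_univ θ)) (hπ.1 θ)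
      _ = maxR M := by rw [← Finset.mul_sum, hπ.2, mul_one]
  -- value at π₀
  have hg0 : (⨅ M : {M : U → Matrix (Fin n) (Fin n) ℂ // IsPOVM M},
      ∑ θ, risk w ρ M.1 θ * π₀ θ) = v := by
    apply le_antisymm
    · have hb : BddBelow (Set.range fun M : {M : U → Matrix (Fin n) (Fin n) ℂ // IsPOVM M} =>
          ∑ θ, risk w ρ M.1 θ * π₀ θ) := by
        refine ⟨v, ?_⟩
        rintro x ⟨M, rfl⟩
        exact hkey M.1 M.2
      calc (⨅ M : {M : U → Matrix (Fin n) (Fin n) ℂ // IsPOVM M},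
            ∑ θ, risk w ρ M.1 θ * π₀ θ)
          ≤ ∑ θ, risk w ρ M₀ θ * π₀ θ := ciInf_le hb ⟨M₀, hM₀K⟩
        _ ≤ maxR M₀ := hweak π₀ hπ₀mem M₀ hM₀K
        _ = v := rfl
    · exact le_ciInf fun M => hkey M.1 M.2
  -- the sup over π of the inf equals v
  have hgle : ∀ π : stdSimplex ℝ Θ,
      (⨅ M : {M : U → Matrix (Fin n) (Fin n) ℂ // IsPOVM M},
        ∑ θ, risk w ρ M.1 θ * (π : Θ → ℝ) θ) ≤ v := by
    intro π
    have hb : BddBelow (Set.range fun M : {M : U → Matrix (Fin n) (Fin n) ℂ // IsPOVM M} =>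
        ∑ θ, risk w ρ M.1 θ * (π : Θ → ℝ) θ) := by
      refine ⟨0, ?_⟩
      rintro x ⟨M, rfl⟩
      exact Finset.sum_nonneg fun θ _ => mul_nonneg (hrnn M.1 M.2 θ) (π.2.1 θ)
    calc (⨅ M : {M : U → Matrix (Fin n) (Fin n) ℂ // IsPOVM M},
          ∑ θ, risk w ρ M.1 θ * (π : Θ → ℝ) θ)
        ≤ ∑ θ, risk w ρ M₀ θ * (π : Θ → ℝ) θ := ciInf_le hb ⟨M₀, hM₀K⟩
      _ ≤ maxR M₀ := hweak _ π.2 M₀ hM₀K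
      _ = v := rfl
  have hsup : (⨆ π : stdSimplex ℝ Θ,
      ⨅ M : {M : U → Matrix (Fin n) (Fin n) ℂ // IsPOVM M},
        ∑ θ, risk w ρ M.1 θ * (π : Θ → ℝ) θ) = v := by
    apply le_antisymm
    · exact ciSup_le hgle
    · have hb : BddAbove (Set.range fun π : stdSimplex ℝ Θ =>
          ⨅ M : {M : U → Matrix (Fin n) (Fin n) ℂ // IsPOVM M},
            ∑ θ, risk w ρ M.1 θ * (π : Θ → ℝ) θ) := by
        refine ⟨v, ?_⟩
        rintro x ⟨π, rfl⟩
        exact hgle π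
      calc v = (⨅ M : {M : U → Matrix (Fin n) (Fin n) ℂ // IsPOVM M},
            ∑ θ, risk w ρ M.1 θ * π₀ θ) := hg0.symm
        _ ≤ _ := le_ciSup hb ⟨π₀, hπ₀mem⟩
  refine ⟨⟨M₀, hM₀K⟩, π₀, hπ₀mem, ?_, ?_, ?_⟩
  · rw [hinf, ← hmaxR_eq]
  · rw [hg0, hsup]
  · rw [hinf, hsup]
end

section
/- The quantum relative entropy D(ρ‖σ), defined on pairs of density operators on a finite-dimensional Hilbert space by D(ρ‖σ) = Tr(ρ log ρ − ρ log σ) when range(ρ) ⊆ range(σ) and +∞ otherwise, is a lower semicontinuous function from S(H) × S(H) to [0, +∞]. -/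
open Matrix
open scoped ComplexOrder

variable {n : ℕ}

/-! ### Auxiliary lemmas -/

section Aux

lemma contOn_spec (A : Matrix (Fin n) (Fin n) ℂ) (f : ℝ → ℝ) : ContinuousOn f (spectrum ℝ A) :=
  Matrix.finite_real_spectrum.continuousOn f

/-- An entrywise version of the continuous functional calculus with junk value `0`. -/
noncomputable def matrixCfc (f : ℝ → ℝ) (A : Matrix (Fin n) (Fin n) ℂ) :
    Matrix (Fin n) (Fin n) ℂ :=
  if h : A.IsHermitian then h.cfc f else 0

lemma cfc_entry (A : Matrix (Fin n) (Fin n) ℂ) (hA : A.IsHermitian) (f : ℝ → ℝ) (a b : Fin n) :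
    hA.cfc f a b = ∑ i, (hA.eigenvectorUnitary : Matrix (Fin n) (Fin n) ℂ) a i
      * (f (hA.eigenvalues i) : ℂ)
      * (starRingEnd ℂ) ((hA.eigenvectorUnitary : Matrix (Fin n) (Fin n) ℂ) b i) := by
  rw [Matrix.IsHermitian.cfc, Unitary.conjStarAlgAut_apply, Matrix.mul_apply]
  congr 1 with i
  rw [Matrix.mul_diagonal]
  simp [Matrix.star_apply, Matrix.conjTranspose_apply, mul_comm]

lemma unitary_row_sum (A : Matrix (Fin n) (Fin n) ℂ) (hA : A.IsHermitian) (a : Fin n) :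
    ∑ i, ‖(hA.eigenvectorUnitary : Matrix (Fin n) (Fin n) ℂ) a i‖ ^ 2 = 1 := by
  set U := (hA.eigenvectorUnitary : Matrix (Fin n) (Fin n) ℂ)
  have h : U * star U = 1 := Unitary.mul_star_self_of_mem hA.eigenvectorUnitary.2
  have h2 := congrFun (congrFun h a) a
  rw [Matrix.mul_apply] at h2
  have h3 : ∑ i, U a i * (starRingEnd ℂ) (U a i) = 1 := by
    simpa [Matrix.star_apply, Matrix.conjTranspose_apply] using h2
  simp only [Complex.mul_conj] at h3
  have h4 := congrArg Complex.re h3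
  rw [Complex.re_sum] at h4
  simp only [Complex.ofReal_re, Complex.one_re] at h4
  simpa [Complex.sq_norm] using h4

lemma cfc_entry_bound (A : Matrix (Fin n) (Fin n) ℂ) (hA : A.IsHermitian) (f : ℝ → ℝ) (C : ℝ)
    (hC0 : 0 ≤ C) (hC : ∀ i, |f (hA.eigenvalues i)| ≤ C) (a b : Fin n) :
    ‖hA.cfc f a b‖ ≤ C := by
  set U := (hA.eigenvectorUnitary : Matrix (Fin n) (Fin n) ℂ)
  rw [cfc_entry A hA f a b]
  calc ‖∑ i, U a i * (f (hA.eigenvalues i) : ℂ) * (starRingEnd ℂ) (U b i)‖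
      ≤ ∑ i, ‖U a i * (f (hA.eigenvalues i) : ℂ) * (starRingEnd ℂ) (U b i)‖ :=
        norm_sum_le _ _
    _ ≤ ∑ i, C * (‖U a i‖ * ‖U b i‖) := by
        refine Finset.sum_le_sum fun i _ => ?_
        rw [norm_mul, norm_mul, RingHomIsometric.norm_map]
        have h : ‖(f (hA.eigenvalues i) : ℂ)‖ ≤ C := by
          rw [Complex.norm_real, Real.norm_eq_abs]; exact hC i
        calc ‖U a i‖ * ‖(f (hA.eigenvalues i) : ℂ)‖ * ‖U b i‖
            ≤ ‖U a i‖ * C * ‖U b i‖ := by gcongr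
          _ = C * (‖U a i‖ * ‖U b i‖) := by ring
    _ = C * ∑ i, ‖U a i‖ * ‖U b i‖ := by rw [← Finset.mul_sum]
    _ ≤ C * 1 := by
        gcongr
        have hcs := Real.sum_mul_le_sqrt_mul_sqrt Finset.univ
          (fun i => ‖U a i‖) (fun i => ‖U b i‖)
        rwa [unitary_row_sum A hA a, unitary_row_sum A hA b, Real.sqrt_one, mul_one] at hcs
    _ = C := mul_one C

lemma herm_cfc_sub (A : Matrix (Fin n) (Fin n) ℂ) (hA : A.IsHermitian) (f g : ℝ → ℝ) :
    hA.cfc (fun x => f x - g x) = hA.cfc f - hA.cfc g := by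
  simp only [Matrix.IsHermitian.cfc, Unitary.conjStarAlgAut_apply]
  have h : diagonal (RCLike.ofReal ∘ (fun x => f x - g x) ∘ hA.eigenvalues)
      = diagonal ((RCLike.ofReal ∘ f ∘ hA.eigenvalues) : Fin n → ℂ)
        - diagonal (RCLike.ofReal ∘ g ∘ hA.eigenvalues) := by
    rw [Matrix.diagonal_sub]
    exact congrArg Matrix.diagonal (funext fun i => by simp)
  rw [h, Matrix.mul_sub, Matrix.sub_mul]

lemma herm_cfc_poly (A : Matrix (Fin n) (Fin n) ℂ) (hA : A.IsHermitian) (p : Polynomial ℝ) :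
    hA.cfc (fun x => p.eval x) = Polynomial.aeval A p := by
  rw [← hA.cfc_eq]
  exact cfc_polynomial p A hA

lemma herm_cfc_trace (A : Matrix (Fin n) (Fin n) ℂ) (hA : A.IsHermitian) (f : ℝ → ℝ) :
    (hA.cfc f).trace = ∑ i, (f (hA.eigenvalues i) : ℂ) := by
  rw [Matrix.IsHermitian.cfc, Unitary.conjStarAlgAut_apply, Matrix.trace_mul_cycle,
    Unitary.coe_star_mul_self hA.eigenvectorUnitary, Matrix.one_mul, Matrix.trace_diagonal]
  rfl

lemma trace_mul_cfc (ρ A : Matrix (Fin n) (Fin n) ℂ) (hA : A.IsHermitian) (f : ℝ → ℝ) :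
    (ρ * hA.cfc f).trace
      = ∑ i, ((star (hA.eigenvectorUnitary : Matrix (Fin n) (Fin n) ℂ) * ρ
          * (hA.eigenvectorUnitary : Matrix (Fin n) (Fin n) ℂ)) i i
            * (f (hA.eigenvalues i) : ℂ)) := by
  set U := (hA.eigenvectorUnitary : Matrix (Fin n) (Fin n) ℂ)
  rw [Matrix.IsHermitian.cfc, Unitary.conjStarAlgAut_apply]
  have h : ρ * (U * diagonal (RCLike.ofReal ∘ f ∘ hA.eigenvalues) * star U)
      = (ρ * U) * diagonal (RCLike.ofReal ∘ f ∘ hA.eigenvalues) * star U := by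
    simp only [Matrix.mul_assoc]
  rw [h, Matrix.trace_mul_cycle]
  simp only [← Matrix.mul_assoc]
  rw [Matrix.trace]
  congr 1 with i
  rw [Matrix.diag_apply, Matrix.mul_diagonal]
  rfl

/-- Entrywise continuity of the functional calculus on Hermitian matrices with
spectrum in a fixed compact interval. -/
lemma matrixCfc_entry_continuousOn (f : ℝ → ℝ) (a b : ℝ)
    (hf : ContinuousOn f (Set.Icc a b)) (i j : Fin n) :
    ContinuousOn (fun A => matrixCfc f A i j)
      {A : Matrix (Fin n) (Fin n) ℂ | A.IsHermitian ∧ spectrum ℝ A ⊆ Set.Icc a b} := by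
  set s := {A : Matrix (Fin n) (Fin n) ℂ | A.IsHermitian ∧ spectrum ℝ A ⊆ Set.Icc a b}
  intro A hAs
  have key : ∀ ε > (0:ℝ), ∀ p : Polynomial ℝ, (∀ x ∈ Set.Icc a b, |p.eval x - f x| < ε) →
      ∀ B ∈ s, dist (matrixCfc f B i j) ((Polynomial.aeval B p) i j) ≤ ε := by
    intro ε hε p hp B hBs
    obtain ⟨hB, hBspec⟩ := hBs
    rw [matrixCfc, dif_pos hB, ← herm_cfc_poly B hB p, dist_eq_norm, ← Matrix.sub_apply,
      ← herm_cfc_sub B hB]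
    refine cfc_entry_bound B hB _ ε (le_of_lt hε) (fun k => ?_) i j
    have hk : hB.eigenvalues k ∈ Set.Icc a b := hBspec (hB.eigenvalues_mem_spectrum_real k)
    have h := hp _ hk
    rw [abs_sub_comm] at h
    exact le_of_lt h
  refine Metric.tendsto_nhds.mpr fun ε hε => ?_
  obtain ⟨p, hp⟩ := exists_polynomial_near_of_continuousOn a b f hf (ε/4) (by positivity)
  have hmid : Filter.Tendsto (fun A' : Matrix (Fin n) (Fin n) ℂ => (Polynomial.aeval A' p) i j)
      (nhdsWithin A s) (nhds ((Polynomial.aeval A p) i j)) :=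
    ((p.continuous_aeval.matrix_elem i j).continuousAt).continuousWithinAt
  have hmid' := Metric.tendsto_nhds.mp hmid (ε/4) (by positivity)
  filter_upwards [self_mem_nhdsWithin, hmid'] with B hBs hBmid
  calc dist (matrixCfc f B i j) (matrixCfc f A i j)
      ≤ dist (matrixCfc f B i j) ((Polynomial.aeval B p) i j)
        + dist ((Polynomial.aeval B p) i j) ((Polynomial.aeval A p) i j)
        + dist ((Polynomial.aeval A p) i j) (matrixCfc f A i j) := dist_triangle4 _ _ _ _
    _ < ε/4 + ε/4 + ε/2 := by
        have h1 := key (ε/4) (by positivity) p hp B hBs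
        have h3 := key (ε/4) (by positivity) p hp A hAs
        rw [dist_comm (matrixCfc f A i j)] at h3
        linarith
    _ = ε := by ring

lemma cfc_shift (σ : Matrix (Fin n) (Fin n) ℂ) (hσ : σ.IsHermitian) (ε : ℝ) :
    cfc (fun x : ℝ => x + ε) σ = σ + ε • 1 := by
  have h := cfc_add_const (R := ℝ) (A := Matrix (Fin n) (Fin n) ℂ) ε (fun x => x) σ
    (contOn_spec σ _) hσ
  rw [h, show cfc (fun x : ℝ => x) σ = σ from cfc_id' ℝ σ hσ, Algebra.algebraMap_eq_smul_one]

lemma shift_isHermitian (σ : Matrix (Fin n) (Fin n) ℂ) (hσ : σ.IsHermitian) (ε : ℝ) :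
    (σ + ε • 1).IsHermitian := by
  refine hσ.add ?_
  rw [Matrix.IsHermitian, Matrix.conjTranspose_smul_non_comm, Matrix.conjTranspose_one]
  · simp
  · intro i j; simp [mul_comm]

end Aux

/-- Matrix logarithm on the support, via the functional calculus of Hermitian matrices
(with the convention log 0 = 0, so that `matrixLog A` acts as the logarithm on the
support of `A`); junk value `0` for non-Hermitian matrices. -/
noncomputable def matrixLog (A : Matrix (Fin n) (Fin n) ℂ) : Matrix (Fin n) (Fin n) ℂ :=
  if h : A.IsHermitian then h.cfc Real.log else 0

open scoped Classical in
/-- Quantum relative entropy D(ρ‖σ) = Tr(ρ log ρ − ρ log σ) if range ρ ⊆ range σ,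
and +∞ otherwise. -/
noncomputable def relEntropy (ρ σ : Matrix (Fin n) (Fin n) ℂ) : ENNReal :=
  if LinearMap.range ρ.toLin' ≤ LinearMap.range σ.toLin' then
    ENNReal.ofReal ((ρ * matrixLog ρ - ρ * matrixLog σ).trace.re)
  else ⊤

section Aux2

lemma matrixLog_eq (σ : Matrix (Fin n) (Fin n) ℂ) (hσ : σ.IsHermitian) :
    matrixLog σ = hσ.cfc Real.log := dif_pos hσ

lemma matrixLog_shift (σ : Matrix (Fin n) (Fin n) ℂ) (hσ : σ.IsHermitian) (ε : ℝ) :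
    matrixLog (σ + ε • 1) = hσ.cfc (fun x => Real.log (x + ε)) := by
  rw [matrixLog, dif_pos (shift_isHermitian σ hσ ε), ← Matrix.IsHermitian.cfc_eq, ← hσ.cfc_eq,
    ← cfc_shift σ hσ ε]
  exact (cfc_comp' Real.log (fun x : ℝ => x + ε) σ
    ((Matrix.finite_real_spectrum.image _).continuousOn _) (contOn_spec σ _) hσ).symm

lemma mul_matrixLog_self (ρ : Matrix (Fin n) (Fin n) ℂ) (hρ : ρ.IsHermitian) :
    ρ * matrixLog ρ = hρ.cfc (fun x => x * Real.log x) := by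
  rw [matrixLog_eq ρ hρ, ← hρ.cfc_eq, ← hρ.cfc_eq]
  have h := cfc_mul (fun x : ℝ => x) Real.log ρ (contOn_spec ρ _) (contOn_spec ρ _)
  rw [show cfc (fun x : ℝ => x) ρ = ρ from cfc_id' ℝ ρ hρ] at h
  exact h.symm

lemma trace_eq_sum_eigs (A : Matrix (Fin n) (Fin n) ℂ) (hA : A.IsHermitian) :
    A.trace = ∑ i, (hA.eigenvalues i : ℂ) := by
  have h := herm_cfc_trace A hA (fun x => x)
  rwa [← hA.cfc_eq, show cfc (fun x : ℝ => x) A = A from cfc_id' ℝ A hA] at h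

lemma density_spectrum_Icc (ρ : Matrix (Fin n) (Fin n) ℂ) (hρ : ρ.PosSemidef)
    (htr : ρ.trace = 1) : spectrum ℝ ρ ⊆ Set.Icc 0 1 := by
  rw [Matrix.IsHermitian.spectrum_real_eq_range_eigenvalues hρ.1]
  rintro - ⟨i, rfl⟩
  have hnn := hρ.eigenvalues_nonneg
  have hsum : ∑ j, hρ.1.eigenvalues j = 1 := by
    have h := trace_eq_sum_eigs ρ hρ.1
    rw [htr] at h
    have h2 := congrArg Complex.re h.symm
    simpa [Complex.re_sum] using h2
  refine ⟨hnn i, ?_⟩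
  calc hρ.1.eigenvalues i ≤ ∑ j, hρ.1.eigenvalues j :=
        Finset.single_le_sum (fun j _ => hnn j) (Finset.mem_univ i)
    _ = 1 := hsum

lemma conj_diag_eq_dot (ρ U : Matrix (Fin n) (Fin n) ℂ) (i : Fin n) :
    (star U * ρ * U) i i = star (fun a => U a i) ⬝ᵥ ρ *ᵥ (fun a => U a i) := by
  simp only [Matrix.mul_apply, Matrix.star_apply, Matrix.conjTranspose_apply,
    dotProduct, Matrix.mulVec, Pi.star_apply, Finset.sum_mul, Finset.mul_sum]
  rw [Finset.sum_comm]
  congr 1 with a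
  congr 1 with b
  ring

lemma conj_diag_nonneg (ρ : Matrix (Fin n) (Fin n) ℂ) (hρ : ρ.PosSemidef)
    (U : Matrix (Fin n) (Fin n) ℂ) (i : Fin n) : 0 ≤ (star U * ρ * U) i i := by
  rw [conj_diag_eq_dot]
  exact hρ.dotProduct_mulVec_nonneg _

lemma star_col_vecMul (ρ : Matrix (Fin n) (Fin n) ℂ) (hρ : ρ.IsHermitian) (u : Fin n → ℂ) :
    star u ᵥ* ρ = star (ρ *ᵥ u) := by
  rw [Matrix.star_mulVec, hρ.eq]

lemma range_le_iff (ρ σ : Matrix (Fin n) (Fin n) ℂ) (hρ : ρ.PosSemidef) (hσ : σ.PosSemidef) :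
    LinearMap.range ρ.toLin' ≤ LinearMap.range σ.toLin'
      ↔ ∀ i, hσ.1.eigenvalues i = 0 → ρ *ᵥ ⇑(hσ.1.eigenvectorBasis i) = 0 := by
  constructor
  · intro hrange i hi
    set u := ⇑(hσ.1.eigenvectorBasis i)
    have hmem : ρ *ᵥ u ∈ LinearMap.range σ.toLin' :=
      hrange ⟨u, Matrix.toLin'_apply ρ u⟩
    obtain ⟨y, hy⟩ := hmem
    rw [Matrix.toLin'_apply] at hy
    have hσu : σ *ᵥ u = 0 := by
      rw [hσ.1.mulVec_eigenvectorBasis, hi, zero_smul]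
    have hdot : star u ⬝ᵥ ρ *ᵥ u = 0 := by
      rw [← hy, Matrix.dotProduct_mulVec, star_col_vecMul σ hσ.1, hσu, star_zero,
        zero_dotProduct]
    exact (hρ.dotProduct_mulVec_zero_iff u).mp hdot
  · intro hcond
    rintro - ⟨x, rfl⟩
    rw [Matrix.toLin'_apply]
    set U := (hσ.1.eigenvectorUnitary : Matrix (Fin n) (Fin n) ℂ) with hU
    have hUU : U * star U = 1 := Unitary.mul_star_self_of_mem hσ.1.eigenvectorUnitary.2
    have hv : ρ *ᵥ x = ∑ i, (star U *ᵥ (ρ *ᵥ x)) i • (fun a => U a i) := by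
      have h1 : ρ *ᵥ x = U *ᵥ (star U *ᵥ (ρ *ᵥ x)) := by
        rw [Matrix.mulVec_mulVec, hUU, Matrix.one_mulVec]
      conv_lhs => rw [h1]
      funext a
      simp only [Matrix.mulVec, dotProduct, Finset.sum_apply, Pi.smul_apply,
        smul_eq_mul]
      exact Finset.sum_congr rfl fun i _ => mul_comm _ _
    rw [hv]
    refine Submodule.sum_mem _ fun i _ => ?_
    by_cases hlam : hσ.1.eigenvalues i = 0
    · have hzero : (star U *ᵥ (ρ *ᵥ x)) i = 0 := by
        have hcol : (fun a => U a i) = ⇑(hσ.1.eigenvectorBasis i) := by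
          funext a; exact hσ.1.eigenvectorUnitary_apply a i
        have h2 : (star U *ᵥ (ρ *ᵥ x)) i = star ⇑(hσ.1.eigenvectorBasis i) ⬝ᵥ (ρ *ᵥ x) := by
          simp only [Matrix.mulVec, dotProduct, Matrix.star_apply,
            Matrix.conjTranspose_apply, Pi.star_apply, ← hcol]
        rw [h2, Matrix.dotProduct_mulVec, star_col_vecMul ρ hρ.1, hcond i hlam, star_zero,
          zero_dotProduct]
      rw [hzero, zero_smul]
      exact Submodule.zero_mem _
    · refine Submodule.smul_mem _ _ ?_
      have hcol : (fun a => U a i) = ⇑(hσ.1.eigenvectorBasis i) := by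
        funext a; exact hσ.1.eigenvectorUnitary_apply a i
      refine ⟨((hσ.1.eigenvalues i : ℂ))⁻¹ • ⇑(hσ.1.eigenvectorBasis i), ?_⟩
      rw [Matrix.toLin'_apply, Matrix.mulVec_smul, hσ.1.mulVec_eigenvectorBasis, hcol]
      have h3 : (hσ.1.eigenvalues i : ℝ) • ⇑(hσ.1.eigenvectorBasis i)
          = (hσ.1.eigenvalues i : ℂ) • ⇑(hσ.1.eigenvectorBasis i) := by
        funext a
        simp [Complex.real_smul]
      rw [h3, smul_smul, inv_mul_cancel₀ (by exact_mod_cast hlam), one_smul]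

/-- The real part of `tr (ρ * hA.cfc f)` as a weighted sum over the eigenvalues. -/
lemma trace_mul_cfc_re (ρ A : Matrix (Fin n) (Fin n) ℂ) (hA : A.IsHermitian) (f : ℝ → ℝ) :
    (ρ * hA.cfc f).trace.re
      = ∑ i, ((star (hA.eigenvectorUnitary : Matrix (Fin n) (Fin n) ℂ) * ρ
          * (hA.eigenvectorUnitary : Matrix (Fin n) (Fin n) ℂ)) i i).re
            * f (hA.eigenvalues i) := by
  rw [trace_mul_cfc ρ A hA f, Complex.re_sum]
  exact Finset.sum_congr rfl fun i _ => by
    simp [Complex.mul_re]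

end Aux2

section SupFormula

/-- The approximating functions: `ε_k = 1/(k+1)` regularization of the relative entropy. -/
noncomputable def dEntK (k : ℕ) (p : Matrix (Fin n) (Fin n) ℂ × Matrix (Fin n) (Fin n) ℂ) : ℝ :=
  (p.1 * matrixLog p.1).trace.re
    - (p.1 * matrixLog (p.2 + (((k : ℝ) + 1)⁻¹) • 1)).trace.re

lemma dEntK_continuousOn (k : ℕ) :
    ContinuousOn (dEntK (n := n) k)
      {p : Matrix (Fin n) (Fin n) ℂ × Matrix (Fin n) (Fin n) ℂ |
        (p.1.PosSemidef ∧ p.1.trace = 1) ∧ (p.2.PosSemidef ∧ p.2.trace = 1)} := by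
  set ε : ℝ := ((k : ℝ) + 1)⁻¹ with hεdef
  have hε : 0 < ε := by positivity
  set S := {p : Matrix (Fin n) (Fin n) ℂ × Matrix (Fin n) (Fin n) ℂ |
        (p.1.PosSemidef ∧ p.1.trace = 1) ∧ (p.2.PosSemidef ∧ p.2.trace = 1)} with hSdef
  set s₁ := {A : Matrix (Fin n) (Fin n) ℂ | A.IsHermitian ∧ spectrum ℝ A ⊆ Set.Icc 0 1}
    with hs₁def
  have hmaps1 : Set.MapsTo Prod.fst S s₁ := fun p hp =>
    ⟨hp.1.1.1, density_spectrum_Icc p.1 hp.1.1 hp.1.2⟩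
  have hmaps2 : Set.MapsTo Prod.snd S s₁ := fun p hp =>
    ⟨hp.2.1.1, density_spectrum_Icc p.2 hp.2.1 hp.2.2⟩
  have hfc : ContinuousOn (fun x : ℝ => x * Real.log x) (Set.Icc (0:ℝ) 1) :=
    Real.continuous_mul_log.continuousOn
  have hgc : ContinuousOn (fun x : ℝ => Real.log (x + ε)) (Set.Icc (0:ℝ) 1) := by
    refine ContinuousOn.log (by fun_prop) fun x hx => ?_
    have := hx.1
    positivity
  have hG1 : ContinuousOn (fun p : Matrix (Fin n) (Fin n) ℂ × Matrix (Fin n) (Fin n) ℂ =>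
      ∑ i, ((matrixCfc (fun x => x * Real.log x) p.1) i i).re) S := by
    refine continuousOn_finset_sum _ fun i _ => ?_
    exact Complex.continuous_re.comp_continuousOn
      (((matrixCfc_entry_continuousOn (fun x => x * Real.log x) 0 1 hfc i i).comp
        continuous_fst.continuousOn hmaps1))
  have hG2 : ContinuousOn (fun p : Matrix (Fin n) (Fin n) ℂ × Matrix (Fin n) (Fin n) ℂ =>
      ∑ i, ∑ j, (p.1 i j * (matrixCfc (fun x => Real.log (x + ε)) p.2) j i).re) S := by
    refine continuousOn_finset_sum _ fun i _ => ?_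
    refine continuousOn_finset_sum _ fun j _ => ?_
    refine Complex.continuous_re.comp_continuousOn (ContinuousOn.mul ?_ ?_)
    · exact ((continuous_fst.matrix_elem i j)).continuousOn
    · exact ((matrixCfc_entry_continuousOn (fun x => Real.log (x + ε)) 0 1 hgc j i).comp
        continuous_snd.continuousOn hmaps2)
  refine ContinuousOn.congr (hG1.sub hG2) fun p hp => ?_
  obtain ⟨⟨hρ, hρtr⟩, ⟨hσ, hσtr⟩⟩ := hp
  have e1 : (p.1 * matrixLog p.1).trace.re
      = ∑ i, ((matrixCfc (fun x => x * Real.log x) p.1) i i).re := by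
    rw [mul_matrixLog_self p.1 hρ.1, matrixCfc, dif_pos hρ.1, Matrix.trace, Complex.re_sum]
    rfl
  have e2 : (p.1 * matrixLog (p.2 + ε • 1)).trace.re
      = ∑ i, ∑ j, (p.1 i j * (matrixCfc (fun x => Real.log (x + ε)) p.2) j i).re := by
    rw [matrixLog_shift p.2 hσ.1 ε, matrixCfc, dif_pos hσ.1, Matrix.trace, Complex.re_sum]
    refine Finset.sum_congr rfl fun i _ => ?_
    rw [Matrix.diag_apply, Matrix.mul_apply, Complex.re_sum]
  rw [dEntK, e1, e2]
  rfl

lemma relEntropy_eq_iSup (ρ σ : Matrix (Fin n) (Fin n) ℂ)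
    (hρ : ρ.PosSemidef) (hρtr : ρ.trace = 1) (hσ : σ.PosSemidef) (hσtr : σ.trace = 1) :
    relEntropy ρ σ = ⨆ k, ENNReal.ofReal (dEntK k (ρ, σ)) := by
  set U := (hσ.1.eigenvectorUnitary : Matrix (Fin n) (Fin n) ℂ) with hUdef
  set lam := hσ.1.eigenvalues with hlamdef
  set c : Fin n → ℝ := fun i => ((star U * ρ * U) i i).re with hcdef
  set T : ℝ := ∑ j, hρ.1.eigenvalues j * Real.log (hρ.1.eigenvalues j) with hTdef
  set L : ℕ → ℝ := fun k => ∑ i, c i * Real.log (lam i + ((k : ℝ) + 1)⁻¹) with hLdef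
  set L0 : ℝ := ∑ i, c i * Real.log (lam i) with hL0def
  -- basic facts
  have hc0 : ∀ i, 0 ≤ c i := fun i => by
    have h := conj_diag_nonneg ρ hρ U i
    exact (Complex.le_def.mp h).1
  have hlam01 : ∀ i, lam i ∈ Set.Icc (0:ℝ) 1 := fun i =>
    density_spectrum_Icc σ hσ hσtr (hσ.1.eigenvalues_mem_spectrum_real i)
  have hczero_iff : ∀ i, c i = 0 ↔ ρ *ᵥ ⇑(hσ.1.eigenvectorBasis i) = 0 := by
    intro i
    have hcol : (fun a => U a i) = ⇑(hσ.1.eigenvectorBasis i) := by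
      funext a; exact hσ.1.eigenvectorUnitary_apply a i
    have hdot := conj_diag_eq_dot ρ U i
    rw [hcol] at hdot
    have hnn := conj_diag_nonneg ρ hρ U i
    constructor
    · intro hc
      refine (hρ.dotProduct_mulVec_zero_iff _).mp ?_
      rw [← hdot]
      have him := (Complex.le_def.mp hnn).2
      exact Complex.ext (by simpa using hc) (by simpa using him.symm)
    · intro hvec
      have : (star U * ρ * U) i i = 0 := by
        rw [hdot, hvec, dotProduct_zero]
      rw [hcdef]
      simp [this]
  -- value computations
  have hT : (ρ * matrixLog ρ).trace.re = T := by
    rw [mul_matrixLog_self ρ hρ.1, herm_cfc_trace ρ hρ.1, Complex.re_sum, hTdef]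
    exact Finset.sum_congr rfl fun j _ => by simp
  have hLk : ∀ k : ℕ, (ρ * matrixLog (σ + (((k : ℝ) + 1)⁻¹) • 1)).trace.re = L k := fun k => by
    rw [matrixLog_shift σ hσ.1 _, trace_mul_cfc_re ρ σ hσ.1]
  have hL0 : (ρ * matrixLog σ).trace.re = L0 := by
    rw [matrixLog_eq σ hσ.1, trace_mul_cfc_re ρ σ hσ.1]
  have hdEnt : ∀ k, dEntK k (ρ, σ) = T - L k := fun k => by
    rw [dEntK]; dsimp only; rw [hT, hLk k]
  by_cases hrange : LinearMap.range ρ.toLin' ≤ LinearMap.range σ.toLin'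
  · rw [relEntropy, if_pos hrange]
    have hzero : ∀ i, lam i = 0 → c i = 0 := fun i hi =>
      (hczero_iff i).mpr ((range_le_iff ρ σ hρ hσ).mp hrange i hi)
    have hval : (ρ * matrixLog ρ - ρ * matrixLog σ).trace.re = T - L0 := by
      rw [Matrix.trace_sub, Complex.sub_re, hT, hL0]
    rw [hval]
    have hmono : Monotone (fun k => ENNReal.ofReal (dEntK k (ρ, σ))) := by
      intro k k' hkk'
      refine ENNReal.ofReal_le_ofReal ?_
      rw [hdEnt, hdEnt]
      refine sub_le_sub_left ?_ T
      refine Finset.sum_le_sum fun i _ => ?_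
      refine mul_le_mul_of_nonneg_left ?_ (hc0 i)
      have hli := (hlam01 i).1
      refine Real.log_le_log (by positivity) ?_
      refine add_le_add_right ?_ _
      refine inv_anti₀ (by positivity) ?_
      have : (k : ℝ) ≤ (k' : ℝ) := by exact_mod_cast hkk'
      linarith
    have htendR : Filter.Tendsto (fun k => dEntK k (ρ, σ)) Filter.atTop (nhds (T - L0)) := by
      simp only [hdEnt]
      refine Filter.Tendsto.const_sub T ?_
      rw [hL0def, hLdef]
      refine tendsto_finset_sum _ fun i _ => ?_
      by_cases hci : c i = 0
      · simp only [hci, zero_mul]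
        exact tendsto_const_nhds
      · have hlpos : 0 < lam i := by
          rcases lt_or_eq_of_le (hlam01 i).1 with h | h
          · exact h
          · exact absurd (hzero i h.symm) hci
        have hinv : Filter.Tendsto (fun k : ℕ => ((k : ℝ) + 1)⁻¹) Filter.atTop (nhds 0) := by
          have h := tendsto_one_div_add_atTop_nhds_zero_nat (𝕜 := ℝ)
          simpa [one_div] using h
        have hadd : Filter.Tendsto (fun k : ℕ => lam i + ((k : ℝ) + 1)⁻¹)
            Filter.atTop (nhds (lam i)) := by
          have := (tendsto_const_nhds (x := lam i) (f := Filter.atTop (α := ℕ))).add hinv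
          simpa using this
        have hlog := ((Real.continuousAt_log hlpos.ne').tendsto).comp hadd
        exact hlog.const_mul (c i)
    have h1 := tendsto_atTop_iSup hmono
    have h2 := (ENNReal.continuous_ofReal.tendsto (T - L0)).comp htendR
    exact (tendsto_nhds_unique h2 h1)
  · rw [relEntropy, if_neg hrange]
    symm
    rw [iSup_eq_top]
    intro b hb
    have hncond : ¬ ∀ i, hσ.1.eigenvalues i = 0 → ρ *ᵥ ⇑(hσ.1.eigenvectorBasis i) = 0 :=
      fun h => hrange ((range_le_iff ρ σ hρ hσ).mpr h)
    push_neg at hncond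
    obtain ⟨i0, hi0lam, hi0vec⟩ := hncond
    clear hrange
    have hi0lam' : lam i0 = 0 := hi0lam
    have hcpos : 0 < c i0 :=
      (hc0 i0).lt_of_ne fun h => hi0vec ((hczero_iff i0).mp h.symm)
    set C : ℝ := ∑ i ∈ Finset.univ.erase i0, c i * Real.log (lam i + 1) with hCdef
    have hLbound : ∀ k : ℕ, L k ≤ c i0 * Real.log (((k : ℝ) + 1)⁻¹) + C := by
      intro k
      have hsplit : L k = (∑ i ∈ Finset.univ.erase i0, c i * Real.log (lam i + ((k:ℝ)+1)⁻¹))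
          + c i0 * Real.log (lam i0 + ((k:ℝ)+1)⁻¹) :=
        (Finset.sum_erase_add _ _ (Finset.mem_univ i0)).symm
      rw [hsplit, hi0lam', zero_add, add_comm]
      refine add_le_add_right ?_ _
      refine Finset.sum_le_sum fun i _ => ?_
      refine mul_le_mul_of_nonneg_left ?_ (hc0 i)
      have hli := (hlam01 i).1
      refine Real.log_le_log (by positivity) ?_
      refine add_le_add_right ?_ _
      rw [inv_le_one_iff₀]
      right; linarith [Nat.cast_nonneg (α := ℝ) k]
    have hdibound : ∀ k : ℕ, T - C + c i0 * Real.log ((k:ℝ)+1) ≤ dEntK k (ρ, σ) := by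
      intro k
      rw [hdEnt k]
      have h := hLbound k
      rw [Real.log_inv] at h
      linarith
    have htop : Filter.Tendsto (fun k : ℕ => T - C + c i0 * Real.log ((k:ℝ)+1))
        Filter.atTop Filter.atTop := by
      refine Filter.tendsto_atTop_add_const_left _ _ ?_
      refine Filter.Tendsto.const_mul_atTop hcpos ?_
      exact Real.tendsto_log_atTop.comp
        (Filter.tendsto_atTop_add_const_right _ 1 tendsto_natCast_atTop_atTop)
    obtain ⟨k, hk⟩ := (htop.eventually_ge_atTop (b.toReal + 1)).exists
    refine ⟨k, ?_⟩
    have h1 : b.toReal + 1 ≤ dEntK k (ρ, σ) := le_trans hk (hdibound k)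
    rw [ENNReal.lt_ofReal_iff_toReal_lt hb.ne]
    linarith

end SupFormula

/-- the quantum relative entropy is lower semicontinuous on
S(H) × S(H), the set of pairs of density operators. -/
theorem relEntropy_lowerSemicontinuousOn :
    LowerSemicontinuousOn (fun p : Matrix (Fin n) (Fin n) ℂ × Matrix (Fin n) (Fin n) ℂ =>
        relEntropy p.1 p.2)
      {p | (p.1.PosSemidef ∧ p.1.trace = 1) ∧ (p.2.PosSemidef ∧ p.2.trace = 1)} := by
  set S := {p : Matrix (Fin n) (Fin n) ℂ × Matrix (Fin n) (Fin n) ℂ |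
    (p.1.PosSemidef ∧ p.1.trace = 1) ∧ (p.2.PosSemidef ∧ p.2.trace = 1)} with hSdef
  intro p hp y hy
  have hsup : ∀ q ∈ S, relEntropy q.1 q.2 = ⨆ k, ENNReal.ofReal (dEntK k q) := by
    intro q hq
    have h := relEntropy_eq_iSup q.1 q.2 hq.1.1 hq.1.2 hq.2.1 hq.2.2
    simpa using h
  have hy' : y < ⨆ k, ENNReal.ofReal (dEntK k p) := by
    rw [← hsup p hp]; exact hy
  obtain ⟨k, hk⟩ := lt_iSup_iff.mp hy'
  have hcont : ContinuousWithinAt (fun q => ENNReal.ofReal (dEntK k q)) S p :=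
    ENNReal.continuous_ofReal.continuousAt.comp_continuousWithinAt ((dEntK_continuousOn k) p hp)
  have hev := hcont.eventually (eventually_gt_nhds hk)
  filter_upwards [hev, self_mem_nhdsWithin] with q hq hqS
  calc y < ENNReal.ofReal (dEntK k q) := hq
    _ ≤ ⨆ k, ENNReal.ofReal (dEntK k q) := le_iSup (fun k => ENNReal.ofReal (dEntK k q)) k
    _ = relEntropy q.1 q.2 := (hsup q hqS).symm
end

section
/- Define Rⁿ : [0,1] → ℝ by Rⁿ(θ) = 1 − θ for 1/n ≤ θ ≤ 1 and Rⁿ(θ) = (n−1)θ for 0 ≤ θ ≤ 1/n. Then each Rⁿ is continuous, the pointwise supremum R(θ) = sup_n Rⁿ(θ) equals 1 − θ for θ ∈ (0,1] and 0 for θ = 0, R is lower semicontinuous but not continuous, sup_{θ∈[0,1]} R(θ) = 1, and there is no Borel probability measure π on [0,1] with ∫ R dπ = 1. -/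
open MeasureTheory Set

noncomputable section

/-- Rⁿ(θ) = (n−1)θ for 0 ≤ θ ≤ 1/n and 1 − θ for 1/n ≤ θ ≤ 1. -/
def Rseq (n : ℕ) (θ : ℝ) : ℝ := if θ ≤ 1 / n then (n - 1 : ℝ) * θ else 1 - θ

/-- R(θ) = sup_n Rⁿ(θ): equal to 1 − θ on (0,1] and 0 at 0. -/
def Rlim (θ : ℝ) : ℝ := if θ = 0 then 0 else 1 - θ

lemma Rseq_cont (n : ℕ) : Continuous (Rseq (n + 1)) := by
  apply Continuous.if_le (continuous_const.mul continuous_id) (by continuity)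
    continuous_id continuous_const
  intro x hx
  subst hx
  push_cast
  have : (n : ℝ) + 1 ≠ 0 := by positivity
  simp only [Pi.mul_apply, id]
  field_simp

lemma Rseq_le (n : ℕ) {θ : ℝ} (hθ : 0 ≤ θ) : Rseq (n + 1) θ ≤ 1 - θ := by
  unfold Rseq
  split_ifs with h
  · push_cast at h ⊢
    have hn : (0:ℝ) < (n:ℝ) + 1 := by positivity
    have h' : θ * ((n : ℝ) + 1) ≤ 1 := (le_div_iff₀ hn).mp h
    nlinarith
  · exact le_rfl

lemma Rlim_lt_one {θ : ℝ} (hθ : θ ∈ Icc (0:ℝ) 1) : Rlim θ < 1 := by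
  unfold Rlim
  split_ifs with h
  · norm_num
  · have : 0 < θ := lt_of_le_of_ne hθ.1 (Ne.symm h)
    linarith

lemma Rlim_nonneg {θ : ℝ} (hθ : θ ∈ Icc (0:ℝ) 1) : 0 ≤ Rlim θ := by
  unfold Rlim
  split_ifs with h
  · exact le_rfl
  · linarith [hθ.2]

/-- each Rⁿ is continuous on [0,1]; the pointwise supremum is R, which is
lower semicontinuous but not continuous on [0,1]; sup R = 1; and no Borel probability
measure π on [0,1] satisfies ∫ R dπ = 1. -/
theorem pathological_loss :
    (∀ n : ℕ, ContinuousOn (Rseq (n + 1)) (Icc (0 : ℝ) 1)) ∧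
    (∀ θ ∈ Icc (0 : ℝ) 1, (⨆ n : ℕ, Rseq (n + 1) θ) = Rlim θ) ∧
    LowerSemicontinuousOn Rlim (Icc (0 : ℝ) 1) ∧
    ¬ ContinuousOn Rlim (Icc (0 : ℝ) 1) ∧
    (⨆ θ : Icc (0 : ℝ) 1, Rlim θ) = 1 ∧
    ∀ π : Measure ℝ, IsProbabilityMeasure π → π (Icc (0 : ℝ) 1)ᶜ = 0 →
      (∫ θ, Rlim θ ∂π) ≠ 1 := by
  refine ⟨fun n => (Rseq_cont n).continuousOn, ?_, ?_, ?_, ?_, ?_⟩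
  · -- supremum formula
    intro θ hθ
    rcases eq_or_lt_of_le hθ.1 with h0 | h0
    · have : ∀ n : ℕ, Rseq (n + 1) θ = 0 := by
        intro n
        unfold Rseq
        rw [← h0]
        rw [if_pos (by positivity)]
        ring
      simp only [this, ciSup_const]
      simp [Rlim, ← h0]
    · have hRlim : Rlim θ = 1 - θ := by simp [Rlim, ne_of_gt h0]
      rw [hRlim]
      have hbdd : BddAbove (range fun n : ℕ => Rseq (n + 1) θ) :=
        ⟨1 - θ, by rintro x ⟨n, rfl⟩; exact Rseq_le n hθ.1⟩
      apply le_antisymm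
      · exact ciSup_le fun n => Rseq_le n hθ.1
      · obtain ⟨N, hN⟩ := exists_nat_gt (1 / θ)
        have hθN : 1 / ((N : ℝ) + 1) < θ := by
          rw [div_lt_iff₀ (by positivity)]
          rw [div_lt_iff₀ h0] at hN
          nlinarith
        have : Rseq (N + 1) θ = 1 - θ := by
          unfold Rseq
          rw [if_neg]
          push_cast
          exact not_le.mpr hθN
        calc 1 - θ = Rseq (N + 1) θ := this.symm
          _ ≤ _ := le_ciSup hbdd N
  · -- lower semicontinuity
    intro θ hθ
    rcases eq_or_lt_of_le hθ.1 with h0 | h0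
    · intro y hy
      rw [Rlim, ← h0, if_pos rfl] at hy
      filter_upwards [self_mem_nhdsWithin] with x hx
      exact lt_of_lt_of_le hy (Rlim_nonneg hx)
    · have hc : ContinuousWithinAt Rlim (Icc (0:ℝ) 1) θ := by
        apply ContinuousAt.continuousWithinAt
        have heq : Rlim =ᶠ[nhds θ] fun x => 1 - x := by
          filter_upwards [IsOpen.mem_nhds isOpen_ne (ne_of_gt h0)] with x hx
          simp [Rlim, hx]
        exact ContinuousAt.congr (by fun_prop) heq.symm
      exact hc.lowerSemicontinuousWithinAt
  · -- not continuous
    intro hcont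
    have h0 : ContinuousWithinAt Rlim (Icc (0:ℝ) 1) 0 :=
      hcont 0 ⟨le_refl _, by norm_num⟩
    have hseq : Filter.Tendsto (fun n : ℕ => 1 / ((n : ℝ) + 1)) Filter.atTop
        (nhdsWithin 0 (Icc (0:ℝ) 1)) := by
      apply tendsto_nhdsWithin_of_tendsto_nhds_of_eventually_within
      · exact tendsto_one_div_add_atTop_nhds_zero_nat
      · filter_upwards with n
        constructor
        · positivity
        · rw [div_le_one (by positivity)]; linarith [Nat.cast_nonneg (α := ℝ) n]
    have h1 : Filter.Tendsto (fun n : ℕ => Rlim (1 / ((n : ℝ) + 1))) Filter.atTop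
        (nhds (Rlim 0)) := h0.tendsto.comp hseq
    have h2 : Filter.Tendsto (fun n : ℕ => Rlim (1 / ((n : ℝ) + 1))) Filter.atTop
        (nhds 1) := by
      have : ∀ n : ℕ, Rlim (1 / ((n : ℝ) + 1)) = 1 - 1 / ((n : ℝ) + 1) := by
        intro n
        have : (1 : ℝ) / ((n : ℝ) + 1) ≠ 0 := by positivity
        unfold Rlim
        rw [if_neg this]
      simp only [this]
      have := tendsto_one_div_add_atTop_nhds_zero_nat (𝕜 := ℝ)
      have h3 := Filter.Tendsto.const_sub (1:ℝ) this
      simpa using h3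
    have := tendsto_nhds_unique h1 h2
    rw [Rlim, if_pos rfl] at this
    norm_num at this
  · -- supremum = 1
    have hbdd : BddAbove (range fun θ : Icc (0:ℝ) 1 => Rlim θ) :=
      ⟨1, by rintro x ⟨θ, rfl⟩; exact le_of_lt (Rlim_lt_one θ.2)⟩
    apply le_antisymm
    · exact ciSup_le fun θ => le_of_lt (Rlim_lt_one θ.2)
    · have key : ∀ n : ℕ, 1 - 1 / ((n : ℝ) + 1) ≤ ⨆ θ : Icc (0:ℝ) 1, Rlim θ := by
        intro n
        have hmem : (1 / ((n : ℝ) + 1)) ∈ Icc (0:ℝ) 1 := by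
          constructor
          · positivity
          · rw [div_le_one (by positivity)]; linarith [Nat.cast_nonneg (α := ℝ) n]
        have hval : Rlim (1 / ((n : ℝ) + 1)) = 1 - 1 / ((n : ℝ) + 1) := by
          have : (1 : ℝ) / ((n : ℝ) + 1) ≠ 0 := by positivity
          unfold Rlim
          rw [if_neg this]
        calc 1 - 1 / ((n : ℝ) + 1) = Rlim (1 / ((n : ℝ) + 1)) := hval.symm
          _ ≤ _ := le_ciSup hbdd ⟨_, hmem⟩
      have hlim : Filter.Tendsto (fun n : ℕ => 1 - 1 / ((n : ℝ) + 1)) Filter.atTop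
          (nhds 1) := by
        have h3 := Filter.Tendsto.const_sub (1:ℝ) tendsto_one_div_add_atTop_nhds_zero_nat
        simpa using h3
      exact le_of_tendsto' hlim key
  · -- no least favorable prior
    intro π hπ hπc hint
    have hae : ∀ᵐ θ ∂π, θ ∈ Icc (0:ℝ) 1 := by
      rw [MeasureTheory.ae_iff]
      exact hπc
    have hmeas : Measurable Rlim := by
      unfold Rlim
      exact Measurable.ite (by simp [measurableSet_eq]) measurable_const (by fun_prop)
    have hintg : Integrable Rlim π := by
      refine memLp_one_iff_integrable.mp (MemLp.of_bound hmeas.aestronglyMeasurable 1 ?_)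
      filter_upwards [hae] with θ hθ
      rw [Real.norm_eq_abs, abs_le]
      exact ⟨by linarith [Rlim_nonneg hθ], le_of_lt (Rlim_lt_one hθ)⟩
    have hg : ∫ θ, (1 - Rlim θ) ∂π = 0 := by
      rw [integral_sub (integrable_const 1) hintg, hint]
      simp
    have hgnn : 0 ≤ᵐ[π] fun θ => 1 - Rlim θ := by
      filter_upwards [hae] with θ hθ
      simp only [Pi.zero_apply]
      linarith [Rlim_lt_one hθ]
    have hgae : (fun θ => 1 - Rlim θ) =ᵐ[π] 0 :=
      (integral_eq_zero_iff_of_nonneg_ae hgnn ((integrable_const 1).sub hintg)).mp hg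
    have : ∀ᵐ θ ∂π, False := by
      filter_upwards [hae, hgae] with θ hθ hθ'
      simp only [Pi.zero_apply] at hθ'
      linarith [Rlim_lt_one hθ]
    rw [MeasureTheory.ae_iff] at this
    have huniv : π univ = 0 := by simpa using this
    have h1 := measure_univ (μ := π)
    rw [huniv] at h1
    exact zero_ne_one h1
end
end
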